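/- Let M be a compact metric space with Borel probability measure m and f : M → M Borel measurable. Then the minimal 1-observable statistical attractor is unique: if K₁ and K₂ are both nonempty compact f-invariant sets with m(B(K₁)) = m(B(K₂)) = 1 and neither contains a proper nonempty compact f-invariant subset whose basin has full measure, then K₁ = K₂. -/

import Mathlib

open MeasureTheory Filter Metric Set
open scoped Classical ENNReal Topology

/-- Frequency of visits, up to time `n - 1`, of the orbit of `x` to the
`ε`-neighborhood of `K`: `(1/n) · #{0 ≤ j ≤ n−1 : dist(f^j(x), K) < ε}`. -/
noncomputable def visitFreq {M : Type*} [MetricSpace M] (f : M → M) (K : Set M) (ε : ℝ)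
    (x : M) (n : ℕ) : ℝ :=
  (((Finset.range n).filter (fun j => infDist (f^[j] x) K < ε)).card : ℝ) / n

/-- Basin of statistical attraction of `K`. -/
def statBasin {M : Type*} [MetricSpace M] (f : M → M) (K : Set M) : Set M :=
  {x | ∀ ε > 0, Tendsto (fun n => visitFreq f K ε x n) atTop (𝓝 1)}

/-- The auxiliary basin `B_ε(K) = {x : liminf_n (1/n)·#{j < n : dist(f^j(x),K) < ε} > 1 − ε}`. -/
def statBasinEps {M : Type*} [MetricSpace M] (f : M → M) (K : Set M) (ε : ℝ) : Set M :=
  {x | 1 - ε < atTop.liminf (fun n => visitFreq f K ε x n)}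

section Aux
variable {M : Type*} [MetricSpace M]

lemma visitFreq_le_one (f : M → M) (K : Set M) (ε : ℝ) (x : M) (n : ℕ) :
    visitFreq f K ε x n ≤ 1 := by
  rcases Nat.eq_zero_or_pos n with h | h
  · simp [visitFreq, h]
  · rw [visitFreq, div_le_one (by exact_mod_cast h)]
    exact_mod_cast (Finset.card_filter_le _ _).trans_eq (Finset.card_range n)

lemma visitFreq_mono (f : M → M) (K : Set M) {ε ε' : ℝ} (h : ε ≤ ε') (x : M) (n : ℕ) :
    visitFreq f K ε x n ≤ visitFreq f K ε' x n := by
  refine div_le_div_of_nonneg_right ?_ n.cast_nonneg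
  have : ((Finset.range n).filter (fun j => infDist (f^[j] x) K < ε)) ⊆
      ((Finset.range n).filter (fun j => infDist (f^[j] x) K < ε')) := by
    intro j hj
    simp only [Finset.mem_filter] at hj ⊢
    exact ⟨hj.1, hj.2.trans_le h⟩
  exact_mod_cast Finset.card_le_card this

/-- limit point lemma -/
lemma mem_inter_of_seq [CompactSpace M] {A B : Set M} (hA : IsClosed A) (hB : IsClosed B)
    (hAne : A.Nonempty) (hBne : B.Nonempty) (y : ℕ → M)
    (h₁ : ∀ n, infDist (y n) A < 1 / (n + 1)) (h₂ : ∀ n, infDist (y n) B < 1 / (n + 1)) :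
    ∃ z ∈ A ∩ B, ∃ φ : ℕ → ℕ, StrictMono φ ∧ Tendsto (y ∘ φ) atTop (𝓝 z) := by
  obtain ⟨z, -, φ, hφ, hz⟩ := isCompact_univ.tendsto_subseq (x := y) (fun n => mem_univ _)
  have key : ∀ (C : Set M), IsClosed C → C.Nonempty →
      (∀ n, infDist (y n) C < 1 / (n + 1)) → z ∈ C := by
    intro C hC hCne hd
    rw [hC.mem_iff_infDist_zero hCne]
    have t1 : Tendsto (fun n => infDist (y (φ n)) C) atTop (𝓝 (infDist z C)) :=
      ((continuous_infDist_pt C).tendsto z).comp hz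
    have t2 : Tendsto (fun n : ℕ => 1 / ((n : ℝ) + 1)) atTop (𝓝 0) :=
      tendsto_one_div_add_atTop_nhds_zero_nat
    have hle : infDist z C ≤ 0 := by
      refine le_of_tendsto_of_tendsto t1 t2 ?_
      filter_upwards with n
      refine (hd (φ n)).le.trans ?_
      gcongr
      exact_mod_cast hφ.le_apply
    exact le_antisymm hle (infDist_nonneg)
  exact ⟨z, ⟨key A hA hAne h₁, key B hB hBne h₂⟩, φ, hφ, hz⟩

end Aux

section Aux2
variable {M : Type*} [MetricSpace M]

/-- Uniform neighborhood lemma for intersections in a compact space. -/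
lemma exists_delta_inter [CompactSpace M] {A B : Set M} (hA : IsClosed A) (hB : IsClosed B)
    (hAne : A.Nonempty) (hBne : B.Nonempty) {ε : ℝ} (hε : 0 < ε) :
    ∃ δ > 0, ∀ y : M, infDist y A < δ → infDist y B < δ → infDist y (A ∩ B) < ε := by
  by_contra hcon
  push_neg at hcon
  have hex : ∀ n : ℕ, ∃ y : M, infDist y A < 1 / (n + 1) ∧ infDist y B < 1 / (n + 1) ∧
      ε ≤ infDist y (A ∩ B) := by
    intro n
    obtain ⟨y, h1, h2, h3⟩ := hcon (1 / (n + 1)) (by positivity)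
    exact ⟨y, h1, h2, h3⟩
  choose y hy1 hy2 hy3 using hex
  obtain ⟨z, hz, φ, hφ, hconv⟩ := mem_inter_of_seq hA hB hAne hBne y hy1 hy2
  have t1 : Tendsto (fun n => infDist (y (φ n)) (A ∩ B)) atTop (𝓝 (infDist z (A ∩ B))) :=
    ((continuous_infDist_pt (A ∩ B)).tendsto z).comp hconv
  have : ε ≤ infDist z (A ∩ B) := ge_of_tendsto t1 (Eventually.of_forall fun n => hy3 (φ n))
  rw [infDist_zero_of_mem hz] at this
  exact absurd this (not_le.mpr hε)

variable [MeasurableSpace M] [BorelSpace M]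

lemma measurable_visitFreq {f : M → M} (hf : Measurable f) (K : Set M) (ε : ℝ) (n : ℕ) :
    Measurable (fun x => visitFreq f K ε x n) := by
  have : ∀ x, visitFreq f K ε x n =
      (∑ j ∈ Finset.range n, if infDist (f^[j] x) K < ε then (1 : ℝ) else 0) / n := by
    intro x
    rw [visitFreq, Finset.card_filter]
    norm_num
  simp only [this]
  apply Measurable.div_const
  apply Finset.measurable_sum
  intro j _
  have hmeas : MeasurableSet {x : M | infDist (f^[j] x) K < ε} :=
    measurableSet_lt ((continuous_infDist_pt K).measurable.comp (hf.iterate j))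
      measurable_const
  exact Measurable.ite hmeas measurable_const measurable_const

lemma measurableSet_statBasin {f : M → M} (hf : Measurable f) (K : Set M) :
    MeasurableSet (statBasin f K) := by
  have key : statBasin f K =
      ⋂ q : {q : ℚ // 0 < q}, {x | Tendsto (fun n => visitFreq f K q x n) atTop (𝓝 1)} := by
    ext x
    simp only [statBasin, mem_setOf_eq, mem_iInter]
    constructor
    · intro h q
      exact h q (by exact_mod_cast q.2)
    · intro h ε hε
      obtain ⟨q, hq0, hqε⟩ := exists_rat_btwn hε
      have hq0' : 0 < q := by exact_mod_cast hq0
      refine tendsto_of_tendsto_of_tendsto_of_le_of_le (h ⟨q, hq0'⟩) tendsto_const_nhds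
        (fun n => visitFreq_mono f K hqε.le x n) (fun n => visitFreq_le_one f K ε x n)
  rw [key]
  exact MeasurableSet.iInter fun q =>
    measurableSet_tendsto (𝓝 1) (fun n => measurable_visitFreq hf K q n)

/-- The basin of an intersection contains the intersection of basins. -/
lemma inter_basin_subset [CompactSpace M] {f : M → M} {A B : Set M}
    (hA : IsClosed A) (hB : IsClosed B) (hAne : A.Nonempty) (hBne : B.Nonempty) :
    statBasin f A ∩ statBasin f B ⊆ statBasin f (A ∩ B) := by
  rintro x ⟨hxA, hxB⟩ ε hε
  obtain ⟨δ, hδ, hδε⟩ := exists_delta_inter hA hB hAne hBne hε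
  have hlow : Tendsto (fun n => visitFreq f A δ x n + visitFreq f B δ x n - 1) atTop (𝓝 1) := by
    have := ((hxA δ hδ).add (hxB δ hδ)).sub_const 1
    norm_num at this
    exact this
  refine tendsto_of_tendsto_of_tendsto_of_le_of_le' hlow tendsto_const_nhds ?_
    (Eventually.of_forall fun n => visitFreq_le_one f (A ∩ B) ε x n)
  filter_upwards [eventually_ge_atTop 1] with n hn
  have hn' : (0 : ℝ) < n := by exact_mod_cast hn
  set S₁ := (Finset.range n).filter (fun j => infDist (f^[j] x) A < δ) with hS₁
  set S₂ := (Finset.range n).filter (fun j => infDist (f^[j] x) B < δ) with hS₂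
  set T := (Finset.range n).filter (fun j => infDist (f^[j] x) (A ∩ B) < ε) with hT
  have hsub : S₁ ∩ S₂ ⊆ T := by
    intro j hj
    simp only [hS₁, hS₂, hT, Finset.mem_inter, Finset.mem_filter] at hj ⊢
    exact ⟨hj.1.1, hδε _ hj.1.2 hj.2.2⟩
  have hcard : S₁.card + S₂.card ≤ T.card + n := by
    calc S₁.card + S₂.card = (S₁ ∪ S₂).card + (S₁ ∩ S₂).card :=
          (Finset.card_union_add_card_inter S₁ S₂).symm
      _ ≤ n + T.card := by
          refine add_le_add ?_ (Finset.card_le_card hsub)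
          exact (Finset.card_le_card (Finset.union_subset (Finset.filter_subset _ _)
            (Finset.filter_subset _ _))).trans_eq (Finset.card_range n)
      _ = T.card + n := add_comm _ _
  have hcardR : (S₁.card : ℝ) + S₂.card ≤ (T.card : ℝ) + n := by exact_mod_cast hcard
  show visitFreq f A δ x n + visitFreq f B δ x n - 1 ≤ visitFreq f (A ∩ B) ε x n
  rw [visitFreq, visitFreq, visitFreq, ← hS₁, ← hS₂, ← hT, ← add_div, sub_le_iff_le_add,
    div_add' _ _ _ hn'.ne', div_le_div_iff_of_pos_right hn']
  linarith
end Aux2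

/-- If some point lies in both basins, the intersection is nonempty. -/
lemma inter_nonempty_of_basin {M : Type*} [MetricSpace M] [CompactSpace M] {f : M → M}
    {A B : Set M} (hA : IsClosed A) (hB : IsClosed B) (hAne : A.Nonempty) (hBne : B.Nonempty)
    {x : M} (hxA : x ∈ statBasin f A) (hxB : x ∈ statBasin f B) : (A ∩ B).Nonempty := by
  have hex : ∀ k : ℕ, ∃ y : M, infDist y A < 1 / (k + 1) ∧ infDist y B < 1 / (k + 1) := by
    intro k
    set δ : ℝ := 1 / (k + 1) with hδdef
    have hδ : 0 < δ := by positivity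
    have h1 := hxA δ hδ
    have h2 := hxB δ hδ
    have h1' := h1.eventually (eventually_gt_nhds (by norm_num : (1:ℝ)/2 < 1))
    have h2' := h2.eventually (eventually_gt_nhds (by norm_num : (1:ℝ)/2 < 1))
    obtain ⟨n, ⟨hn1, hn2⟩, hn3⟩ := ((h1'.and h2').and (eventually_ge_atTop 1)).exists
    set S₁ := (Finset.range n).filter (fun j => infDist (f^[j] x) A < δ)
    set S₂ := (Finset.range n).filter (fun j => infDist (f^[j] x) B < δ)
    have hn' : (0 : ℝ) < n := by exact_mod_cast hn3
    have hc1 : (n : ℝ) / 2 < S₁.card := by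
      rw [visitFreq, lt_div_iff₀ hn'] at hn1; linarith
    have hc2 : (n : ℝ) / 2 < S₂.card := by
      rw [visitFreq, lt_div_iff₀ hn'] at hn2; linarith
    have hint : (S₁ ∩ S₂).Nonempty := by
      rw [← Finset.card_pos]
      have hu : (S₁ ∪ S₂).card ≤ n :=
        (Finset.card_le_card (Finset.union_subset (Finset.filter_subset _ _)
          (Finset.filter_subset _ _))).trans_eq (Finset.card_range n)
      have := Finset.card_union_add_card_inter S₁ S₂
      have hcc : (n : ℝ) < S₁.card + S₂.card := by linarith
      have : (S₁ ∪ S₂).card + (S₁ ∩ S₂).card = S₁.card + S₂.card := this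
      have hccN : n < S₁.card + S₂.card := by exact_mod_cast hcc
      omega
    obtain ⟨j, hj⟩ := hint
    simp only [S₁, S₂, Finset.mem_inter, Finset.mem_filter] at hj
    exact ⟨f^[j] x, hj.1.2, hj.2.2⟩
  choose y hy1 hy2 using hex
  obtain ⟨z, hz, -⟩ := mem_inter_of_seq hA hB hAne hBne y hy1 hy2
  exact ⟨z, hz⟩


/-- uniqueness of the minimal `1`-observable statistical attractor. -/
theorem minimal_one_obs_statAttractor_unique {M : Type*} [MetricSpace M] [CompactSpace M]
    [MeasurableSpace M] [BorelSpace M] (m : Measure M) [IsProbabilityMeasure m]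
    (f : M → M) (hf : Measurable f) (K₁ K₂ : Set M)
    (h₁ne : K₁.Nonempty) (h₂ne : K₂.Nonempty) (h₁c : IsCompact K₁) (h₂c : IsCompact K₂)
    (h₁inv : f ⁻¹' K₁ = K₁) (h₂inv : f ⁻¹' K₂ = K₂)
    (h₁b : m (statBasin f K₁) = 1) (h₂b : m (statBasin f K₂) = 1)
    (h₁min : ∀ K' : Set M, K' ⊆ K₁ → K' ≠ K₁ → K'.Nonempty → IsCompact K' →
      f ⁻¹' K' = K' → m (statBasin f K') ≠ 1)
    (h₂min : ∀ K' : Set M, K' ⊆ K₂ → K' ≠ K₂ → K'.Nonempty → IsCompact K' →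
      f ⁻¹' K' = K' → m (statBasin f K') ≠ 1) :
    K₁ = K₂ := by
  have hmeas₁ := measurableSet_statBasin hf K₁
  have hmeas₂ := measurableSet_statBasin hf K₂
  have hinterb : m (statBasin f K₁ ∩ statBasin f K₂) = 1 := by
    rw [← prob_compl_eq_zero_iff (hmeas₁.inter hmeas₂), Set.compl_inter]
    refine le_antisymm ((measure_union_le _ _).trans ?_) zero_le
    rw [prob_compl_eq_zero_iff hmeas₁ |>.mpr h₁b, prob_compl_eq_zero_iff hmeas₂ |>.mpr h₂b,
      add_zero]
  have hne : (statBasin f K₁ ∩ statBasin f K₂).Nonempty :=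
    nonempty_of_measure_ne_zero (μ := m) (by rw [hinterb]; exact one_ne_zero)
  obtain ⟨x, hxA, hxB⟩ := hne
  have hKne : (K₁ ∩ K₂).Nonempty :=
    inter_nonempty_of_basin h₁c.isClosed h₂c.isClosed h₁ne h₂ne hxA hxB
  have hbsub := inter_basin_subset (f := f) h₁c.isClosed h₂c.isClosed h₁ne h₂ne
  have hKb : m (statBasin f (K₁ ∩ K₂)) = 1 := by
    refine le_antisymm prob_le_one ?_
    calc (1 : ℝ≥0∞) = m (statBasin f K₁ ∩ statBasin f K₂) := hinterb.symm
      _ ≤ m (statBasin f (K₁ ∩ K₂)) := measure_mono hbsub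
  have hKinv : f ⁻¹' (K₁ ∩ K₂) = K₁ ∩ K₂ := by
    rw [Set.preimage_inter, h₁inv, h₂inv]
  have hKc : IsCompact (K₁ ∩ K₂) := h₁c.inter_right h₂c.isClosed
  have e₁ : K₁ ∩ K₂ = K₁ := by
    by_contra hne'
    exact h₁min (K₁ ∩ K₂) inter_subset_left hne' hKne hKc hKinv hKb
  have e₂ : K₁ ∩ K₂ = K₂ := by
    by_contra hne'
    exact h₂min (K₁ ∩ K₂) inter_subset_right hne' hKne hKc hKinv hKb
  rw [← e₁, e₂]
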